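/- arXiv:2410.15004 — 2 statements merged into one kernel-verified Lean document; each statement's English description precedes it below -/
import Mathlib

section
/- M-equivalence over an ordered alphabet is left and right invariant: if w and w' are M-equivalent, then for any words u and v, the words u·w·v and u·w'·v are M-equivalent. -/
set_option maxRecDepth 4000


open List

/-- Number of occurrences of `v` as a scattered subsequence of `w`. -/
def scount {α : Type*} [DecidableEq α] (w v : List α) : ℕ := w.sublists.count v

/-- The word `a_i a_{i+1} ⋯ a_j` over the ordered alphabet {0 < 1 < ⋯ < s-1} (as naturals). -/
def seg (i j : ℕ) : List ℕ := List.range' i (j + 1 - i)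

/-- M-equivalence over the ordered alphabet {0 < 1 < ⋯ < s-1}:
agreement on subsequence counts of all factors of the alphabet word. -/
def MEqN (s : ℕ) (w w' : List ℕ) : Prop :=
  ∀ i j : ℕ, i ≤ j → j < s → scount w (seg i j) = scount w' (seg i j)

/-- `w` is a word over the alphabet {0, …, s-1}. -/
def inAlpha (s : ℕ) (w : List ℕ) : Prop := ∀ x ∈ w, x < s

lemma sum_ind {α : Type*} [DecidableEq α] (l : List (List α)) :
    (l.map fun x => if x = [] then (1:ℕ) else 0).sum = l.count [] := by
  induction l with
  | nil => rfl
  | cons a l ih =>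
    rw [map_cons, sum_cons, ih, count_cons]
    by_cases h : a = [] <;> simp [h] <;> omega

lemma scount_nil {α : Type*} [DecidableEq α] (w : List α) : scount w [] = 1 := by
  induction w with
  | nil => rfl
  | cons a w ih =>
    simp only [scount, sublists_cons, bind_eq_flatMap, count_flatMap] at *
    rw [show ((count ([]:List α)) ∘ fun x => [x, a :: x]) = fun x => if x = [] then 1 else 0 from ?_, sum_ind, ih]
    funext x; by_cases h : x = [] <;> simp [h, count_cons]

lemma count_map_app {α : Type*} [DecidableEq α] (L : List (List α)) (x p : List α) :
    count (p ++ x) (L.map (· ++ x)) = count p L := by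
  induction L with
  | nil => rfl
  | cons q L ih =>
    rw [map_cons, count_cons, count_cons, ih]
    by_cases h : q = p
    · simp [h]
    · have : ¬ (q ++ x = p ++ x) := fun hc => h ((append_left_inj x).1 hc)
      simp [h, this]

lemma count_map_append {α : Type*} [DecidableEq α] (L : List (List α)) (x v : List α) :
    count v (L.map (· ++ x)) =
      if x <:+ v then count (v.take (v.length - x.length)) L else 0 := by
  split_ifs with hx
  · obtain ⟨p, rfl⟩ := hx
    have hp : (p ++ x).take ((p ++ x).length - x.length) = p := by
      simp [take_append]
    rw [hp]; exact count_map_app L x p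
  · rw [count_eq_zero]
    intro hv
    obtain ⟨q, _, rfl⟩ := mem_map.1 hv
    exact hx ⟨q, rfl⟩

lemma drop_injOn (v : List α) : Set.InjOn (fun n => v.drop n) (Set.Iic v.length) := by
  intro a ha b hb hab
  have : (v.drop a).length = (v.drop b).length := congrArg length hab
  simp only [length_drop, Set.mem_Iic] at *
  omega

lemma count_beq_eq {β : Type*} [BEq β] [LawfulBEq β] [DecidableEq β] (x : β) (l : List β) :
    @count β instBEqOfDecidableEq x l = count x l := by
  induction l with
  | nil => rfl
  | cons a l ih =>
    rw [@count_cons _ instBEqOfDecidableEq, count_cons, ih]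
    by_cases h : a = x <;> simp [h]

lemma scount_append {α : Type*} [DecidableEq α] (a b v : List α) :
    scount (a ++ b) v =
      ∑ n ∈ Finset.range (v.length + 1), scount a (v.take n) * scount b (v.drop n) := by
  classical
  unfold scount
  rw [sublists_append, bind_eq_flatMap, count_flatMap]
  have hmap : (count v ∘ fun x => (sublists a).map (· ++ x)) =
      fun x => if x <:+ v then count (v.take (v.length - x.length)) a.sublists else 0 := by
    funext x; exact count_map_append _ _ _
  rw [hmap, Finset.sum_list_map_count]
  simp only [count_beq_eq]
  set T := (sublists b).toFinset with hT
  set S := Finset.image (fun n => v.drop n) (Finset.range (v.length + 1)) with hSdef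
  have hinj : ∀ x ∈ Finset.range (v.length + 1), ∀ y ∈ Finset.range (v.length + 1),
      v.drop x = v.drop y → x = y := by
    intro x hx y hy hxy
    have hx' := Finset.mem_range.1 hx
    have hy' := Finset.mem_range.1 hy
    exact drop_injOn v (Set.mem_Iic.2 (by omega)) (Set.mem_Iic.2 (by omega)) hxy
  have hR : (∑ n ∈ Finset.range (v.length + 1),
        count (v.take n) a.sublists * count (v.drop n) b.sublists) = ∑ x ∈ S,
      count x b.sublists • (if x <:+ v then count (v.take (v.length - x.length)) a.sublists else 0) := by
    rw [hSdef, Finset.sum_image hinj]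
    refine Finset.sum_congr rfl fun n hn => ?_
    have hn' : n ≤ v.length := by have := Finset.mem_range.1 hn; omega
    have hsfx : v.drop n <:+ v := drop_suffix n v
    simp only [hsfx, if_pos, length_drop, smul_eq_mul]
    rw [show v.length - (v.length - n) = n from by omega, mul_comm]
  rw [hR]
  have h1 : ∀ x ∈ S ∪ T, x ∉ S →
      count x b.sublists • (if x <:+ v then count (v.take (v.length - x.length)) a.sublists else 0) = 0 := by
    intro x _ hxS
    have hns : ¬ x <:+ v := by
      rintro ⟨p, hp⟩
      apply hxS
      refine Finset.mem_image.2 ⟨p.length, Finset.mem_range.2 ?_, ?_⟩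
      · have := congrArg length hp; simp only [length_append] at this; omega
      · rw [← hp, drop_left]
    simp [hns]
  have h2 : ∀ x ∈ S ∪ T, x ∉ T →
      count x b.sublists • (if x <:+ v then count (v.take (v.length - x.length)) a.sublists else 0) = 0 := by
    intro x _ hxT
    have : count x b.sublists = 0 := by
      rw [count_eq_zero]; exact fun hc => hxT (List.mem_toFinset.2 hc)
    simp [this]
  exact (Finset.sum_subset Finset.subset_union_right h2).trans
    (Finset.sum_subset Finset.subset_union_left h1).symm

lemma take_range' (i m n : ℕ) : (List.range' i m).take n = List.range' i (min n m) := by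
  rcases le_or_gt m n with h | h
  · rw [take_of_length_le (by simpa using h), Nat.min_eq_right h]
  · rw [Nat.min_eq_left h.le, show m = n + (m - n) from by omega,
      ← range'_append_1 (s := i) (m := n) (n := m - n), take_left' (by simp)]

lemma drop_range' (i m n : ℕ) : (List.range' i m).drop n = List.range' (i + n) (m - n) := by
  rcases le_or_gt m n with h | h
  · rw [drop_of_length_le (by simpa using h), Nat.sub_eq_zero_of_le h, range']
  · rw [show m = n + (m - n) from by omega, ← range'_append_1 (s := i) (m := n) (n := m - n),
      drop_left' (by simp), show n + (m - n) - n = m - n from by omega]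

lemma MEqN_take {s : ℕ} {w w' : List ℕ} (h : MEqN s w w') {i j : ℕ} (hij : i ≤ j) (hjs : j < s)
    (n : ℕ) : scount w ((seg i j).take n) = scount w' ((seg i j).take n) := by
  rw [seg, take_range']
  rcases Nat.eq_zero_or_pos (min n (j + 1 - i)) with h0 | h0
  · rw [h0]; simp only [range']; rw [scount_nil, scount_nil]
  · have hk : min n (j + 1 - i) ≤ j + 1 - i := Nat.min_le_right _ _
    have : List.range' i (min n (j + 1 - i)) = seg i (i + min n (j + 1 - i) - 1) := by
      rw [seg]; congr 1; omega
    rw [this]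
    exact h _ _ (by omega) (by omega)

lemma MEqN_drop {s : ℕ} {w w' : List ℕ} (h : MEqN s w w') {i j : ℕ} (hij : i ≤ j) (hjs : j < s)
    (n : ℕ) : scount w ((seg i j).drop n) = scount w' ((seg i j).drop n) := by
  rw [seg, _root_.drop_range']
  rcases Nat.eq_zero_or_pos (j + 1 - i - n) with h0 | h0
  · rw [h0]; simp only [range']; rw [scount_nil, scount_nil]
  · have : List.range' (i + n) (j + 1 - i - n) = seg (i + n) j := by
      rw [seg]; congr 1; omega
    rw [this]
    exact h _ _ (by omega) hjs

lemma MEqN_right {s : ℕ} {w w' : List ℕ} (h : MEqN s w w') (v : List ℕ) :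
    MEqN s (w ++ v) (w' ++ v) := by
  intro i j hij hjs
  rw [scount_append, scount_append]
  exact Finset.sum_congr rfl fun n _ => by rw [MEqN_take h hij hjs n]

lemma MEqN_left {s : ℕ} {w w' : List ℕ} (h : MEqN s w w') (u : List ℕ) :
    MEqN s (u ++ w) (u ++ w') := by
  intro i j hij hjs
  rw [scount_append, scount_append]
  exact Finset.sum_congr rfl fun n _ => by rw [MEqN_drop h hij hjs n]

theorem stmt_3 (s : ℕ) (w w' u v : List ℕ)
    (hw : inAlpha s w) (hw' : inAlpha s w') (hu : inAlpha s u) (hv : inAlpha s v)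
    (h : MEqN s w w') :
    MEqN s (u ++ w ++ v) (u ++ w' ++ v) := by
  exact MEqN_right (MEqN_left h u) v
end

section
/- Let Σ = {a_1 < a_2 < ... < a_s} be an ordered alphabet, and suppose w' = w_1 · a_i · w_2 · a_j · w_3 and w'' = w_1 · a_j · w_2 · a_i · w_3 with i < j are M-equivalent and distinct. Then j ≥ i+2 and |w_2|_{a_{i+1}} = 0; consequently, a_i · w_2 · a_j contains a factor a_{i'} a_{j'} with i' ≤ i and j' ≥ i+2. -/
open List

lemma count_beq_congr {α : Type*} {b1 b2 : BEq α} [@LawfulBEq α b1] [@LawfulBEq α b2]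
    (v : α) (l : List α) : @count α b1 v l = @count α b2 v l := by
  induction l with
  | nil => rfl
  | cons x l ih =>
    rw [@count_cons, @count_cons, ih]
    congr 1
    rcases eq_or_ne x v with rfl | h
    · rw [@beq_self_eq_true, @beq_self_eq_true]
    · rw [@beq_eq_false_iff_ne _ b1 _ x v |>.mpr h, @beq_eq_false_iff_ne _ b2 _ x v |>.mpr h]

lemma cnt_bridge {α : Type*} [DecidableEq α] (v : List α) (L : List (List α)) :
    L.count v = @count _ (instBEqOfDecidableEq) v L :=
  @count_beq_congr (List α) _ (instBEqOfDecidableEq) inferInstance inferInstance v L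

lemma count_sublists_cons {α : Type*} [DecidableEq α] (x : α) (w : List α) (v : List α) :
    ((x :: w).sublists).count v = w.sublists.count v + (w.sublists.map (x :: ·)).count v := by
  have h := (sublists_cons_perm_append x w).count_eq v
  rw [count_append] at h
  exact h

lemma count_nil_sublists {α : Type*} [DecidableEq α] (w : List α) :
    w.sublists.count ([] : List α) = 1 := by
  induction w with
  | nil => rfl
  | cons x w ih =>
    rw [count_sublists_cons, ih, count_eq_zero.2 (by simp)]

lemma count_map_cons {α : Type*} [DecidableEq α] (x a : α) (t : List α) (L : List (List α)) :
    (L.map (x :: ·)).count (a :: t) = if x = a then L.count t else 0 := by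
  rcases eq_or_ne x a with rfl | h
  · rw [if_pos rfl, cnt_bridge, cnt_bridge]
    exact (count_beq_congr _ _).trans
      ((count_map_of_injective L (x :: ·) (fun u v h => by simpa using h) t).trans (count_beq_congr _ _))
  · rw [if_neg h]
    exact count_eq_zero.2 (by simp [eq_comm, h])

lemma count_single_sublists {α : Type*} [DecidableEq α] (w : List α) (a : α) :
    w.sublists.count [a] = w.count a := by
  induction w with
  | nil => rfl
  | cons x w ih =>
    rw [count_sublists_cons, ih, count_map_cons, count_nil_sublists, count_cons]
    rcases eq_or_ne x a with rfl | h
    · simp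
    · simp [h, Ne.symm h]

lemma scount_pair_cons {α : Type*} [DecidableEq α] (x : α) (w : List α) (a b : α) :
    scount (x :: w) [a, b] = scount w [a, b] + if x = a then w.count b else 0 := by
  unfold scount
  rw [count_sublists_cons, count_map_cons]
  split <;> simp [count_single_sublists]

lemma scount_pair_nil {α : Type*} [DecidableEq α] (a b : α) :
    scount ([] : List α) [a, b] = 0 := rfl

lemma scount_pair_append {α : Type*} [DecidableEq α] (u v : List α) (a b : α) :
    scount (u ++ v) [a, b] = scount u [a, b] + scount v [a, b] + u.count a * v.count b := by
  induction u with
  | nil => simp [scount_pair_nil]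
  | cons x u ih =>
    rw [cons_append, scount_pair_cons, ih, scount_pair_cons, count_cons, count_append]
    rcases eq_or_ne x a with rfl | h
    · simp; ring
    · simp [h, Ne.symm h]

lemma find_factor (s i j : ℕ) (hj : i + 2 ≤ j) (hjs : j < s) :
    ∀ (l : List ℕ), ((i+1) ∉ l) → (∀ x ∈ l, x < s) → ∀ c, c ≤ i →
    ∃ i' j', i' ≤ i ∧ i + 2 ≤ j' ∧ j' < s ∧ [i', j'] <:+: (c :: (l ++ [j])) := by
  intro l
  induction l with
  | nil =>
    intro _ _ c hc
    exact ⟨c, j, hc, hj, hjs, [], [], by simp⟩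
  | cons x l ih =>
    intro hnx hls c hc
    by_cases hx : x ≤ i
    · obtain ⟨i', j', h1, h2, h3, h4⟩ :=
        ih (fun hy => hnx (mem_cons_of_mem _ hy))
          (fun y hy => hls y (mem_cons_of_mem _ hy)) x hx
      exact ⟨i', j', h1, h2, h3, h4.trans (suffix_cons c _).isInfix⟩
    · have hxne : x ≠ i + 1 := fun e => hnx (e ▸ mem_cons_self)
      exact ⟨c, x, hc, by omega, hls x mem_cons_self, [], l ++ [j], by simp⟩

theorem stmt_14 (s : ℕ) (i j : ℕ) (hij : i < j) (hjs : j < s)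
    (w1 w2 w3 : List ℕ)
    (h1 : inAlpha s w1) (h2 : inAlpha s w2) (h3 : inAlpha s w3)
    (hM : MEqN s (w1 ++ [i] ++ w2 ++ [j] ++ w3) (w1 ++ [j] ++ w2 ++ [i] ++ w3))
    (hne : (w1 ++ [i] ++ w2 ++ [j] ++ w3) ≠ (w1 ++ [j] ++ w2 ++ [i] ++ w3)) :
    i + 2 ≤ j ∧ w2.count (i + 1) = 0 ∧
      ∃ i' j' : ℕ, i' ≤ i ∧ i + 2 ≤ j' ∧ j' < s ∧
        [i', j'] <:+: ([i] ++ w2 ++ [j]) := by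
  have hseg : seg i (i+1) = [i, i+1] := by
    unfold seg
    rw [show i + 1 + 1 - i = 2 by omega]
    simp [List.range']
  have his : i + 1 < s := lt_of_le_of_lt hij hjs
  have heq := hM i (i+1) (Nat.le_succ i) his
  rw [hseg] at heq
  have hj2 : i + 2 ≤ j := by
    by_contra hcon
    have hj : j = i + 1 := by omega
    subst hj
    simp only [scount_pair_append, scount_pair_cons, scount_pair_nil, count_append, count_cons,
      count_nil, beq_iff_eq] at heq
    simp only [show ¬ (i = i+1) by omega, show ¬(i+1 = i) by omega,
      if_false, if_true, eq_self_iff_true] at heq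
    ring_nf at heq
    linarith
  have hcz : w2.count (i+1) = 0 := by
    simp only [scount_pair_append, scount_pair_cons, scount_pair_nil, count_append, count_cons,
      count_nil, beq_iff_eq] at heq
    simp only [show ¬ (i = j) by omega, show ¬(j = i) by omega, show ¬(i+1 = i) by omega,
      show ¬(i = i+1) by omega, show ¬(i+1 = j) by omega, show ¬(j = i+1) by omega,
      if_false, if_true, eq_self_iff_true] at heq
    ring_nf at heq
    rw [show i + 1 = 1 + i from Nat.add_comm i 1]
    linarith
  refine ⟨hj2, hcz, ?_⟩
  obtain ⟨i', j', ha, hb, hc, hd⟩ :=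
    find_factor s i j hj2 hjs w2 (count_eq_zero.mp hcz) h2 i le_rfl
  exact ⟨i', j', ha, hb, hc, hd⟩
end
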